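/- Hardy–Littlewood-type comparison underlying sub-additivity: for any x, y ∈ ℝ^N and any nonincreasing nonnegative weights φ₁ ≥ … ≥ φ_N ≥ 0, Σᵢ φᵢ (x+y)_{(i)} ≥ Σᵢ φᵢ x_{(i)} + Σᵢ φᵢ y_{(i)}, where z_{(1)} ≤ … ≤ z_{(N)} denotes the increasing rearrangement of z. -/

import Mathlib

open MeasureTheory

/-- The increasing rearrangement (order statistics) of `x`. -/
noncomputable def srt {N : ℕ} (x : Fin N → ℝ) : Fin N → ℝ := x ∘ Tuple.sort x

open Finset

lemma srt_le_of_monotone_inj {N k : ℕ} (hk : k ≤ N) (z : Fin N → ℝ)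
    (s : Fin k → Fin N) (hs : Function.Injective s) (hmono : Monotone (z ∘ s)) :
    ∀ t : Fin k, srt z (Fin.castLE hk t) ≤ z (s t) := by
  intro t
  by_contra hcon
  push_neg at hcon
  set c := srt z (Fin.castLE hk t) with hc
  set A : Finset (Fin N) := univ.filter (fun i => z i < c) with hA
  have h1 : (Finset.Iic t).image s ⊆ A := by
    intro i hi
    simp only [mem_image, mem_Iic] at hi
    obtain ⟨u, hu, rfl⟩ := hi
    simp only [hA, mem_filter, mem_univ, true_and]
    exact lt_of_le_of_lt (hmono hu) hcon
  have hcard1 : (t : ℕ) + 1 ≤ A.card := by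
    calc (t : ℕ) + 1 = (Finset.Iic t).card := (Fin.card_Iic t).symm
      _ = ((Finset.Iic t).image s).card := (Finset.card_image_of_injective _ hs).symm
      _ ≤ A.card := Finset.card_le_card h1
  have h2 : A ⊆ (Finset.Iio (Fin.castLE hk t)).image (Tuple.sort z) := by
    intro i hi
    simp only [hA, mem_filter, mem_univ, true_and] at hi
    refine mem_image.mpr ⟨(Tuple.sort z).symm i, ?_, by simp⟩
    rw [mem_Iio]
    by_contra hle
    push_neg at hle
    have hmz : c ≤ z i := by
      have := Tuple.monotone_sort z hle
      simpa [hc, srt, Function.comp] using this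
    exact absurd hi (not_lt.mpr hmz)
  have hcard2 : A.card ≤ (t : ℕ) := by
    calc A.card ≤ ((Finset.Iio (Fin.castLE hk t)).image (Tuple.sort z)).card :=
        Finset.card_le_card h2
      _ = (Finset.Iio (Fin.castLE hk t)).card :=
        Finset.card_image_of_injective _ (Tuple.sort z).injective
      _ = (t : ℕ) := Fin.card_Iio _
  omega

lemma prefix_le_sum {N k : ℕ} (hk : k ≤ N) (z : Fin N → ℝ) (S : Finset (Fin N))
    (hS : S.card = k) :
    ∑ t : Fin k, srt z (Fin.castLE hk t) ≤ ∑ i ∈ S, z i := by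
  set e := S.orderEmbOfFin hS with he
  set w : Fin k → ℝ := fun t => z (e t) with hw
  set τ := Tuple.sort w with hτ
  have hinj : Function.Injective (fun t => e (τ t)) :=
    e.injective.comp τ.injective
  have hmono : Monotone (z ∘ fun t => e (τ t)) := Tuple.monotone_sort w
  have hstep : ∀ t : Fin k, srt z (Fin.castLE hk t) ≤ z (e (τ t)) :=
    srt_le_of_monotone_inj hk z _ hinj hmono
  have hSe : S = Finset.univ.image e := by
    have hsub : Finset.univ.image e ⊆ S := by
      intro i hi
      simp only [Finset.mem_image, Finset.mem_univ, true_and] at hi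
      obtain ⟨t, rfl⟩ := hi
      exact Finset.orderEmbOfFin_mem S hS t
    refine (Finset.eq_of_subset_of_card_le hsub ?_).symm
    rw [Finset.card_image_of_injective _ e.injective, card_univ, Fintype.card_fin, hS]
  calc ∑ t : Fin k, srt z (Fin.castLE hk t) ≤ ∑ t : Fin k, z (e (τ t)) :=
      Finset.sum_le_sum fun t _ => hstep t
    _ = ∑ t : Fin k, z (e t) := Equiv.sum_comp τ (fun t => z (e t))
    _ = ∑ i ∈ S, z i := by
        rw [hSe, Finset.sum_image (fun a _ b _ hab => e.injective hab)]

lemma prefix_superadd {N k : ℕ} (hk : k ≤ N) (x y : Fin N → ℝ) :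
    (∑ t : Fin k, srt x (Fin.castLE hk t)) + ∑ t : Fin k, srt y (Fin.castLE hk t)
      ≤ ∑ t : Fin k, srt (x + y) (Fin.castLE hk t) := by
  set σ := Tuple.sort (x + y) with hσ
  set T : Finset (Fin N) := univ.image (fun t : Fin k => σ (Fin.castLE hk t)) with hT
  have hinj : Function.Injective (fun t : Fin k => σ (Fin.castLE hk t)) :=
    σ.injective.comp (Fin.castLE_injective hk)
  have hTcard : T.card = k := by
    rw [hT, Finset.card_image_of_injective _ hinj, card_univ, Fintype.card_fin]
  have hx := prefix_le_sum hk x T hTcard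
  have hy := prefix_le_sum hk y T hTcard
  have hsum : ∑ t : Fin k, srt (x + y) (Fin.castLE hk t) = ∑ i ∈ T, (x + y) i := by
    rw [hT, Finset.sum_image (fun a _ b _ hab => hinj hab)]
    rfl
  have hsplit : ∑ i ∈ T, (x + y) i = (∑ i ∈ T, x i) + ∑ i ∈ T, y i := by
    rw [← Finset.sum_add_distrib]; rfl
  rw [hsum, hsplit]
  exact add_le_add hx hy

lemma abel_nonneg (f d : ℕ → ℝ) (hf : ∀ i j, i ≤ j → f j ≤ f i) (hf0 : ∀ i, 0 ≤ f i)
    (N : ℕ) (hd : ∀ k, k ≤ N → 0 ≤ ∑ j ∈ Finset.range k, d j) :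
    0 ≤ ∑ i ∈ Finset.range N, f i * d i := by
  have hbp := Finset.sum_range_by_parts f d N
  simp only [smul_eq_mul] at hbp
  rw [hbp]
  have h1 : 0 ≤ f (N - 1) * ∑ i ∈ Finset.range N, d i :=
    mul_nonneg (hf0 _) (hd N le_rfl)
  have h2 : ∑ i ∈ Finset.range (N - 1), (f (i + 1) - f i) * ∑ j ∈ Finset.range (i + 1), d j ≤ 0 := by
    apply Finset.sum_nonpos
    intro i hi
    rw [Finset.mem_range] at hi
    have : i + 1 ≤ N := by omega
    exact mul_nonpos_of_nonpos_of_nonneg (by linarith [hf i (i+1) (Nat.le_succ i)]) (hd _ this)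
  linarith

theorem hardy_littlewood_comparison {N : ℕ} (φ : Fin N → ℝ)
    (hpos : ∀ i, 0 ≤ φ i) (hdec : ∀ i j : Fin N, i ≤ j → φ j ≤ φ i)
    (x y : Fin N → ℝ) :
    (∑ i, φ i * srt x i) + ∑ i, φ i * srt y i ≤ ∑ i, φ i * srt (x + y) i := by
  set a : ℕ → ℝ := fun i => if h : i < N then srt x ⟨i, h⟩ else 0 with ha
  set b : ℕ → ℝ := fun i => if h : i < N then srt y ⟨i, h⟩ else 0 with hb
  set c : ℕ → ℝ := fun i => if h : i < N then srt (x + y) ⟨i, h⟩ else 0 with hc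
  set f : ℕ → ℝ := fun i => if h : i < N then φ ⟨i, h⟩ else 0 with hf
  have hf0 : ∀ i, 0 ≤ f i := by
    intro i
    simp only [hf]
    split
    · exact hpos _
    · exact le_refl 0
  have hfmono : ∀ i j, i ≤ j → f j ≤ f i := by
    intro i j hij
    simp only [hf]
    split
    · rename_i hjN
      have hiN : i < N := lt_of_le_of_lt hij hjN
      rw [dif_pos hiN]
      exact hdec ⟨i, hiN⟩ ⟨j, hjN⟩ hij
    · split
      · exact hpos _
      · exact le_refl 0
  -- prefix sums
  have hpre : ∀ (z : Fin N → ℝ) (g : ℕ → ℝ)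
      (hg : g = fun i => if h : i < N then srt z ⟨i, h⟩ else 0) (k : ℕ) (hk : k ≤ N),
      ∑ j ∈ Finset.range k, g j = ∑ t : Fin k, srt z (Fin.castLE hk t) := by
    intro z g hg k hk
    rw [← Fin.sum_univ_eq_sum_range]
    apply Finset.sum_congr rfl
    intro t _
    have ht : (t : ℕ) < N := lt_of_lt_of_le t.isLt hk
    simp [hg, ht, Fin.castLE]
  have hd : ∀ k, k ≤ N → 0 ≤ ∑ j ∈ Finset.range k, (c j - a j - b j) := by
    intro k hk
    rw [Finset.sum_sub_distrib, Finset.sum_sub_distrib,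
      hpre x a ha k hk, hpre y b hb k hk, hpre (x + y) c hc k hk]
    have := prefix_superadd hk x y
    linarith
  have key := abel_nonneg f (fun i => c i - a i - b i) hfmono hf0 N hd
  have hexp : ∑ i ∈ Finset.range N, f i * (c i - a i - b i)
      = (∑ i ∈ Finset.range N, f i * c i) - (∑ i ∈ Finset.range N, f i * a i)
        - ∑ i ∈ Finset.range N, f i * b i := by
    rw [← Finset.sum_sub_distrib, ← Finset.sum_sub_distrib]
    apply Finset.sum_congr rfl
    intro i _
    ring
  rw [hexp] at key
  -- convert Fin sums to range sums
  have hconv : ∀ (z : Fin N → ℝ) (ψ : Fin N → ℝ) (g : ℕ → ℝ)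
      (hg : g = fun i => if h : i < N then srt z ⟨i, h⟩ else 0),
      (∀ i : Fin N, ψ i = f i) →
      ∑ i, ψ i * srt z i = ∑ i ∈ Finset.range N, f i * g i := by
    intro z ψ g hg hψ
    rw [← Fin.sum_univ_eq_sum_range]
    apply Finset.sum_congr rfl
    intro i _
    have hiN : (i : ℕ) < N := i.isLt
    simp [hg, hiN, hψ i]
  have hψ : ∀ i : Fin N, φ i = f (i : ℕ) := by
    intro i
    simp [hf, i.isLt]
  rw [hconv x φ a ha hψ, hconv y φ b hb hψ, hconv (x + y) φ c hc hψ]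
  linarith
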